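/- In Mat₉(ℂ) = Mat₃(ℂ) ⊗ Mat₃(ℂ), let f = e₁₂ ⊗ e₂₃ - e₁₃ ⊗ e₂₂ + e₂₃ ⊗ e₁₂ - e₂₂ ⊗ e₁₃, and for scalars s, t, u let N₂ = N₁ ⊗ I₃ + I₃ ⊗ N₁ with N₁ = s·e₁₂ + u·e₁₃ + t·e₂₃, and D₂ = D₁ ⊗ I₃ + I₃ ⊗ D₁ with D₁ = s·e₁₁ + (t-s)·e₂₂ - t·e₃₃. Then N₂·f = 0, f·N₂ = 0, and D₂·f = t·f. -/

import Mathlib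

open Kronecker

theorem stmt_14 (s t u : ℂ)
    (e : Fin 3 → Fin 3 → Matrix (Fin 3) (Fin 3) ℂ)
    (he : ∀ i j, e i j = Matrix.single i j 1)
    (N₁ D₁ : Matrix (Fin 3) (Fin 3) ℂ)
    (hN₁ : N₁ = s • e 0 1 + u • e 0 2 + t • e 1 2)
    (hD₁ : D₁ = s • e 0 0 + (t - s) • e 1 1 - t • e 2 2)
    (f N₂ D₂ : Matrix (Fin 3 × Fin 3) (Fin 3 × Fin 3) ℂ)
    (hf : f = e 0 1 ⊗ₖ e 1 2 - e 0 2 ⊗ₖ e 1 1 + e 1 2 ⊗ₖ e 0 1 - e 1 1 ⊗ₖ e 0 2)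
    (hN₂ : N₂ = N₁ ⊗ₖ (1 : Matrix (Fin 3) (Fin 3) ℂ) + (1 : Matrix (Fin 3) (Fin 3) ℂ) ⊗ₖ N₁)
    (hD₂ : D₂ = D₁ ⊗ₖ (1 : Matrix (Fin 3) (Fin 3) ℂ) + (1 : Matrix (Fin 3) (Fin 3) ℂ) ⊗ₖ D₁) :
    N₂ * f = 0 ∧ f * N₂ = 0 ∧ D₂ * f = t • f := by
  simp only [he] at hN₁ hD₁ hf
  subst hN₁ hD₁ hf hN₂ hD₂
  refine ⟨?_, ?_, ?_⟩ <;>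
  · simp only [add_mul, mul_add, sub_mul, mul_sub, smul_mul_assoc, mul_smul_comm,
      ← Matrix.mul_kronecker_mul, Matrix.one_mul, Matrix.mul_one]
    simp (config := { decide := true }) [Matrix.single_mul_single_same,
      Matrix.single_mul_single_of_ne,
      Matrix.zero_kronecker, Matrix.kronecker_zero]
    have key : ∀ (c : ℂ) (i j : Fin 3),
        Matrix.single i j c = c • Matrix.single i j 1 := by
      intro c i j; rw [Matrix.smul_single, smul_eq_mul, mul_one]
    simp only [key s, key t, key u, key (t - s), Matrix.smul_kronecker,
      Matrix.kronecker_smul]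
    module
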